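/- Let θ ∈ ℝ, let c be a positive integer and d ∈ ℤ. On the space E of functions f : ℝ × (ℤ/cℤ) → ℂ such that for each α ∈ ℤ/cℤ the function x ↦ f(x,α) is a Schwartz function, define (fU)(x,α) = f(x − (cθ+d)/c, α − 1) and (fV)(x,α) = e^{2πi(x − d·α̃/c)}·f(x,α), where α̃ ∈ ℤ is any representative of α (the value is independent of the choice since e^{2πi d α̃/c} depends only on α̃ mod c). Then U and V map E into E, and for every f ∈ E one has (fU)V = e^{2πiθ}·(fV)U. -/

import Mathlib

open scoped Real

noncomputable section

lemma htg_sub_const (s : ℝ) : Function.HasTemperateGrowth (fun x : ℝ => x - s) := by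
  apply Function.HasTemperateGrowth.of_fderiv (k := 1) (C := 1 + |s|)
  · have : (fderiv ℝ fun x : ℝ => x - s) = fun _ : ℝ => ContinuousLinearMap.id ℝ ℝ := by
      funext x
      rw [fderiv_sub_const, fderiv_id']
    rw [this]
    exact .const _
  · exact differentiable_id.sub_const s
  · intro x
    simp only [Real.norm_eq_abs, pow_one]
    have := abs_nonneg x
    have := abs_nonneg s
    nlinarith [abs_sub_abs_le_abs_sub x s, abs_sub x s]

lemma iteratedDeriv_cexp_real (a b : ℂ) (n : ℕ) :
    iteratedDeriv n (fun x : ℝ => Complex.exp (a * x + b))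
      = fun x : ℝ => a ^ n * Complex.exp (a * x + b) := by
  induction n with
  | zero => simp
  | succ n ih =>
    rw [iteratedDeriv_succ, ih]
    funext x
    have h : HasDerivAt (fun x : ℝ => Complex.exp (a * x + b))
        (Complex.exp (a * x + b) * a) x := by
      have h1 : HasDerivAt (fun x : ℝ => a * (x : ℂ) + b) a x := by
        simpa using ((Complex.ofRealCLM.hasDerivAt (x := x)).const_mul a).add_const b
      simpa using h1.cexp
    rw [(h.const_mul (a ^ n)).deriv]
    ring

lemma htg_cexp (a b : ℂ) (ha : a.re = 0) :
    Function.HasTemperateGrowth (fun x : ℝ => Complex.exp (a * x + b)) := by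
  constructor
  · exact ((Complex.contDiff_exp (𝕜 := ℂ)).restrict_scalars ℝ).comp
      ((contDiff_const.mul Complex.ofRealCLM.contDiff).add contDiff_const)
  · intro n
    refine ⟨0, ‖a‖ ^ n * Real.exp b.re, fun x => ?_⟩
    rw [norm_iteratedFDeriv_eq_norm_iteratedDeriv, iteratedDeriv_cexp_real, norm_mul, norm_pow]
    have : ‖Complex.exp (a * x + b)‖ = Real.exp b.re := by
      rw [Complex.norm_exp]
      congr 1
      simp [Complex.add_re, Complex.mul_re, ha]
    rw [this]
    simp

/-- Membership in `E = 𝒮(ℝ × ℤ/cℤ)`: for each `α`, the slice `x ↦ f(x, α)` is a Schwartz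
function. -/
def MemSchwartzModule {c : ℕ} (f : ℝ × ZMod c → ℂ) : Prop :=
  ∀ α : ZMod c, ∃ g : SchwartzMap ℝ ℂ, ∀ x : ℝ, f (x, α) = g x

/-- The right action of the generator `U`: `(fU)(x,α) = f(x − (cθ+d)/c, α − 1)`. -/
def actU (θ : ℝ) (c : ℕ) (d : ℤ) (f : ℝ × ZMod c → ℂ) : ℝ × ZMod c → ℂ :=
  fun p => f (p.1 - ((c : ℝ) * θ + (d : ℝ)) / (c : ℝ), p.2 - 1)

/-- The right action of the generator `V`: `(fV)(x,α) = e^{2πi(x − d·α̃/c)}·f(x,α)`, where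
`α̃ ∈ ℤ` is the canonical representative of `α` (the value does not depend on this choice). -/
def actV (c : ℕ) (d : ℤ) (f : ℝ × ZMod c → ℂ) : ℝ × ZMod c → ℂ :=
  fun p => Complex.exp (2 * π * Complex.I *
      ((p.1 : ℂ) - (d : ℂ) * ((p.2.val : ℤ) : ℂ) / (c : ℂ))) * f p

/-- `U` and `V` map `E` into `E`, and `(fU)V = e^{2πiθ}·(fV)U` for every `f ∈ E`. -/
theorem statement8 (θ : ℝ) (c : ℕ) (hc : 0 < c) (d : ℤ) :
    (∀ f : ℝ × ZMod c → ℂ, MemSchwartzModule f →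
      MemSchwartzModule (actU θ c d f) ∧ MemSchwartzModule (actV c d f)) ∧
    (∀ f : ℝ × ZMod c → ℂ, MemSchwartzModule f →
      actV c d (actU θ c d f)
        = fun p => Complex.exp (2 * π * Complex.I * θ) * actU θ c d (actV c d f) p) := by
  have hcC : (c : ℂ) ≠ 0 := Nat.cast_ne_zero.2 hc.ne'
  haveI : NeZero c := ⟨hc.ne'⟩
  constructor
  · intro f hf
    constructor
    · intro α
      obtain ⟨g, hg⟩ := hf (α - 1)
      set s : ℝ := ((c : ℝ) * θ + (d : ℝ)) / (c : ℝ)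
      refine ⟨SchwartzMap.compCLM ℝ (htg_sub_const s)
        ⟨1, 1 + |s|, fun x => ?_⟩ g, fun x => ?_⟩
      · simp only [Real.norm_eq_abs, pow_one]
        have := abs_nonneg x
        have := abs_nonneg s
        nlinarith [abs_sub_abs_le_abs_sub x s, abs_sub x s, abs_nonneg (x - s)]
      · simpa [actU] using hg (x - s)
    · intro α
      obtain ⟨g, hg⟩ := hf α
      set a : ℂ := 2 * π * Complex.I
      set b : ℂ := -(2 * π * Complex.I * ((d : ℂ) * ((α.val : ℤ) : ℂ) / (c : ℂ)))
      have ha : a.re = 0 := by simp [a]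
      refine ⟨SchwartzMap.bilinLeftCLM (ContinuousLinearMap.mul ℝ ℂ) (htg_cexp a b ha) g,
        fun x => ?_⟩
      show actV c d f (x, α) = g x * Complex.exp (a * x + b)
      rw [actV, ← hg x, mul_comm]
      congr 1
      congr 1
      simp only [a, b]
      ring
  · intro f _
    funext p
    obtain ⟨x, α⟩ := p
    obtain ⟨k, hk⟩ : ∃ k : ℤ, ((α - 1).val : ℤ) + 1 - (α.val : ℤ) = c * k := by
      have : ((((α - 1).val : ℤ) + 1 - (α.val : ℤ) : ℤ) : ZMod c) = 0 := by
        push_cast [ZMod.natCast_val, ZMod.cast_id]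
        ring
      exact (ZMod.intCast_zmod_eq_zero_iff_dvd _ _).1 this
    have hkC : ((α.val : ℤ) : ℂ) = (((α - 1).val : ℤ) : ℂ) + 1 - (c : ℂ) * (k : ℂ) := by
      have := congrArg (fun n : ℤ => (n : ℂ)) hk
      push_cast at this ⊢
      linear_combination -this
    simp only [actV, actU]
    set s : ℝ := ((c : ℝ) * θ + (d : ℝ)) / (c : ℝ)
    have hsC : ((x - s : ℝ) : ℂ) = (x : ℂ) - ((c : ℂ) * (θ : ℂ) + (d : ℂ)) / (c : ℂ) := by
      push_cast [s]
      ring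
    have key : 2 * (π : ℂ) * Complex.I * ((x : ℂ) - (d : ℂ) * ((α.val : ℤ) : ℂ) / (c : ℂ))
        = 2 * (π : ℂ) * Complex.I * (θ : ℂ)
          + 2 * (π : ℂ) * Complex.I * (((x - s : ℝ) : ℂ)
              - (d : ℂ) * ((((α - 1).val : ℤ)) : ℂ) / (c : ℂ))
          + ((d * k : ℤ) : ℂ) * (2 * (π : ℂ) * Complex.I) := by
      rw [hsC, hkC]
      push_cast
      field_simp
      ring
    rw [key, Complex.exp_add, Complex.exp_add, Complex.exp_int_mul_two_pi_mul_I, mul_one]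
    push_cast
    ring

end
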